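/- arXiv:2011.03944 — 2 statements merged into one kernel-verified Lean document; each statement's English description precedes it below -/
import Mathlib

section
/- Let $u\in L^1_{loc}(\Omega)$ on open $\Omega\subseteq\mathbb{R}^d$ be locally essentially bounded below. Suppose $u$ satisfies the De Giorgi property (D): for every cube $Q_\rho(y)\subset\Omega$, all $a\in(0,1)$, $M>0$, and $\mu^-\le \operatorname{ess\,inf}_{Q_\rho(y)}u$, there exists $\nu\in(0,1)$ depending only on $a$, $M$, $\mu^-$ (but not on $\rho$ or $y$) such that $|\{x\in Q_\rho(y): u(x)\le \mu^-+M\}|\le \nu|Q_\rho(y)|$ implies $u\ge \mu^-+aM$ a.e. in $Q_{\rho/2}(y)$. Then $u(x)=u_*(x)$ at every Lebesgue point $x$ of $u$; in particular $u_*$ is a lower semicontinuous representative of $u$ (i.e. $u=u_*$ a.e.). -/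
open MeasureTheory Filter Set Metric Topology

private lemma restrict_ball_closedBall {d : ℕ} (x : Fin d → ℝ) {r : ℝ} (hr : 0 < r) :
    (volume : Measure (Fin d → ℝ)).restrict (ball x r)
      = volume.restrict (closedBall x r) := by
  refine Measure.restrict_congr_set ?_
  rw [Filter.eventuallyEq_set]
  rw [MeasureTheory.ae_iff]
  refine measure_mono_null (fun z hz => ?_) (Measure.addHaar_sphere_of_ne_zero volume x hr.ne')
  simp only [mem_setOf_eq, not_iff] at hz
  by_cases hzb : z ∈ ball x r
  · have hzc : z ∉ closedBall x r := by tauto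
    exact absurd (ball_subset_closedBall hzb) hzc
  · have hzc : z ∈ closedBall x r := by tauto
    have : z ∈ closedBall x r \ ball x r := ⟨hzc, hzb⟩
    rwa [closedBall_diff_ball] at this

/-- If a locally integrable, locally essentially bounded below
function `u` satisfies the De Giorgi property (D) — for all `a ∈ (0,1)`,
`M > 0`, `μ⁻ ≤ essinf u` there is `ν ∈ (0,1)` independent of the cube such
that smallness of the sublevel set `{u ≤ μ⁻ + M}` in measure forces
`u ≥ μ⁻ + aM` a.e. on the half cube — then `u = u_*` at every Lebesgue point,
and `u_*` is a (lower semicontinuous) representative of `u`, i.e. `u = u_*` a.e. -/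
theorem stmt2 {d : ℕ} (Ω : Set (Fin d → ℝ)) (hΩ : IsOpen Ω)
    (u : (Fin d → ℝ) → ℝ) (hu : LocallyIntegrableOn u Ω volume)
    (hbd : ∀ K ⊆ Ω, IsCompact K → ∃ m : ℝ, ∀ᵐ y ∂(volume.restrict K), m ≤ u y)
    (hD : ∀ a ∈ Ioo (0:ℝ) 1, ∀ M > (0:ℝ), ∀ μm : ℝ, ∃ ν ∈ Ioo (0:ℝ) 1,
      ∀ (y : Fin d → ℝ) (ρ : ℝ), 0 < ρ → ball y ρ ⊆ Ω →
        (∀ᵐ z ∂(volume.restrict (ball y ρ)), μm ≤ u z) →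
        volume {z ∈ ball y ρ | u z ≤ μm + M} ≤ ENNReal.ofReal ν * volume (ball y ρ) →
        ∀ᵐ z ∂(volume.restrict (ball y (ρ/2))), μm + a * M ≤ u z)
    (ustar : (Fin d → ℝ) → EReal)
    (hstar : ∀ x ∈ Ω, Tendsto (fun r : ℝ =>
        essInf (fun y => (u y : EReal)) (volume.restrict (ball x r)))
      (𝓝[>] 0) (𝓝 (ustar x))) :
    (∀ x ∈ Ω,
        Tendsto (fun r : ℝ => ⨍ y in ball x r, |u x - u y|) (𝓝[>] 0) (𝓝 0) →
        ustar x = (u x : EReal)) ∧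
      (∀ᵐ x ∂(volume.restrict Ω), (u x : EReal) = ustar x) := by
  have hRex : ∀ x ∈ Ω, ∃ R > (0:ℝ), closedBall x R ⊆ Ω := by
    intro x hx
    rcases Metric.isOpen_iff.1 hΩ x hx with ⟨ε, hε, hball⟩
    exact ⟨ε/2, by positivity, (closedBall_subset_ball (by linarith)).trans hball⟩
  have key : ∀ x ∈ Ω,
      Tendsto (fun r : ℝ => ⨍ y in ball x r, |u x - u y|) (𝓝[>] 0) (𝓝 0) →
      ustar x = (u x : EReal) := by
    intro x hx hleb
    obtain ⟨R, hR0, hRΩ⟩ := hRex x hx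
    obtain ⟨m, hm⟩ := hbd (closedBall x R) hRΩ (isCompact_closedBall x R)
    have hint : ∀ {r : ℝ}, 0 < r → r ≤ R →
        IntegrableOn (fun y => |u x - u y|) (ball x r) volume := by
      intro r hr hrR
      have h1 : IntegrableOn u (closedBall x r) volume :=
        hu.integrableOn_compact_subset ((closedBall_subset_closedBall hrR).trans hRΩ)
          (isCompact_closedBall x r)
      have h2 : IntegrableOn u (ball x r) volume := h1.mono_set ball_subset_closedBall
      have h3 : IntegrableOn (fun _ => u x) (ball x r) volume :=
        integrableOn_const measure_ball_lt_top.ne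
      exact (h3.sub h2).abs
    have hvol : ∀ {r : ℝ}, 0 < r → (0:ℝ) < (volume (ball x r)).toReal := by
      intro r hr
      exact ENNReal.toReal_pos (measure_ball_pos volume x hr).ne' measure_ball_lt_top.ne
    -- lower bound on the average from an a.e. lower bound on |u x - u ·|
    have havg : ∀ {r c : ℝ}, 0 < r → r ≤ R →
        (∀ᵐ z ∂(volume.restrict (ball x r)), c ≤ |u x - u z|) →
        c ≤ ⨍ y in ball x r, |u x - u y| := by
      intro r c hr hrR hae
      have hI := hint hr hrR
      have hmono : ∫ _ in ball x r, c ∂volume ≤ ∫ y in ball x r, |u x - u y| ∂volume :=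
        integral_mono_ae (integrableOn_const measure_ball_lt_top.ne) hI hae
      rw [setIntegral_const, smul_eq_mul] at hmono
      rw [setAverage_eq, smul_eq_mul]
      set V := (volume (ball x r)).toReal with hV
      have hVpos : 0 < V := hvol hr
      calc c = V⁻¹ * (V * c) := by field_simp
        _ ≤ V⁻¹ * ∫ y in ball x r, |u x - u y| ∂volume :=
            mul_le_mul_of_nonneg_left hmono (by positivity)
    -- Step 1 : ustar x ≤ u x
    have hle : ustar x ≤ (u x : EReal) := by
      by_contra hcon
      push_neg at hcon
      obtain ⟨c, hc1, hc2⟩ := exists_between hcon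
      have hcbot : c ≠ ⊥ := fun h => by simp [h] at hc1
      have hctop : c ≠ ⊤ := (hc2.trans_le le_top).ne
      set δ := c.toReal with hδdef
      have hcoe : (δ : EReal) = c := EReal.coe_toReal hctop hcbot
      have hδx : u x < δ := by
        rw [← EReal.coe_lt_coe_iff, hcoe]; exact hc1
      set ε := δ - u x with hεdef
      have hε0 : 0 < ε := by simp only [hεdef]; linarith
      have h1 : ∀ᶠ r in 𝓝[>] (0:ℝ),
          c < essInf (fun y => (u y : EReal)) (volume.restrict (ball x r)) :=
        (hstar x hx).eventually (eventually_gt_nhds hc2)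
      have h2 : ∀ᶠ r in 𝓝[>] (0:ℝ), (⨍ y in ball x r, |u x - u y|) < ε :=
        hleb.eventually_lt_const hε0
      have h3 : ∀ᶠ r in 𝓝[>] (0:ℝ), 0 < r ∧ r ≤ R := by
        filter_upwards [(nhdsGT_basis (0:ℝ)).mem_of_mem hR0] with r hr
        exact ⟨hr.1, hr.2.le⟩
      obtain ⟨r, hre, hrR⟩ := ((h1.and h2).and h3).exists
      obtain ⟨hr1, hr2⟩ := hre
      have hae1 : ∀ᵐ z ∂(volume.restrict (ball x r)), c < (u z : EReal) :=
        ae_lt_of_lt_essInf hr1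
      have hae2 : ∀ᵐ z ∂(volume.restrict (ball x r)), ε ≤ |u x - u z| := by
        filter_upwards [hae1] with z hz
        have hz' : δ < u z := by rwa [← hcoe, EReal.coe_lt_coe_iff] at hz
        calc ε ≤ u z - u x := by simp only [hεdef]; linarith
          _ ≤ |u z - u x| := le_abs_self _
          _ = |u x - u z| := abs_sub_comm _ _
      have := havg hrR.1 hrR.2 hae2
      linarith
    -- Step 2 : u x ≤ ustar x
    have hge : (u x : EReal) ≤ ustar x := by
      by_contra hcon
      push_neg at hcon
      -- ustar x is a real number
      have hmE : ∀ᶠ r in 𝓝[>] (0:ℝ),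
          (m : EReal) ≤ essInf (fun y => (u y : EReal)) (volume.restrict (ball x r)) := by
        filter_upwards [(nhdsGT_basis (0:ℝ)).mem_of_mem hR0] with r hr
        refine le_essInf_of_ae_le _ ?_
        have hsub : ball x r ⊆ closedBall x R :=
          (ball_subset_ball hr.2.le).trans ball_subset_closedBall
        have := ae_restrict_of_ae_restrict_of_subset hsub hm
        filter_upwards [this] with z hz using EReal.coe_le_coe_iff.2 hz
      have hLm : (m : EReal) ≤ ustar x := ge_of_tendsto (hstar x hx) hmE
      have hLbot : ustar x ≠ ⊥ := fun h => by
        rw [h] at hLm; exact absurd (le_bot_iff.1 hLm) (EReal.coe_ne_bot m)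
      have hLtop : ustar x ≠ ⊤ := (hcon.trans_le le_top).ne
      set l := (ustar x).toReal with hldef
      have hlcoe : (l : EReal) = ustar x := EReal.coe_toReal hLtop hLbot
      have hlux : l < u x := by rw [← EReal.coe_lt_coe_iff, hlcoe]; exact hcon
      set M := u x - l with hMdef
      have hM : 0 < M := by simp only [hMdef]; linarith
      set μm := l - M/4 with hμmdef
      obtain ⟨ν, hν, hνprop⟩ := hD (1/2) ⟨by norm_num, by norm_num⟩ M hM μm
      -- find r0 with essInf on ball x r0 above μm
      have hμmlt : (μm : EReal) < ustar x := by
        rw [← hlcoe, EReal.coe_lt_coe_iff]; simp only [hμmdef]; linarith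
      have h1 : ∀ᶠ r in 𝓝[>] (0:ℝ),
          (μm : EReal) < essInf (fun y => (u y : EReal)) (volume.restrict (ball x r)) :=
        (hstar x hx).eventually (eventually_gt_nhds hμmlt)
      have h3 : ∀ᶠ r in 𝓝[>] (0:ℝ), 0 < r ∧ r ≤ R := by
        filter_upwards [(nhdsGT_basis (0:ℝ)).mem_of_mem hR0] with r hr
        exact ⟨hr.1, hr.2.le⟩
      obtain ⟨r0, hr0e, hr0R⟩ := (h1.and h3).exists
      have haeμm : ∀ᵐ z ∂(volume.restrict (ball x r0)), μm ≤ u z := by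
        filter_upwards [ae_lt_of_lt_essInf hr0e] with z hz
        exact (EReal.coe_lt_coe_iff.1 hz).le
      -- choose a threshold below which averages are small
      have hev : ∀ᶠ ρ in 𝓝[>] (0:ℝ), (⨍ y in ball x ρ, |u x - u y|) < ν * (M/4) :=
        hleb.eventually_lt_const (mul_pos hν.1 (by linarith))
      obtain ⟨ε2, hε2pos, hε2⟩ := (nhdsGT_basis (0:ℝ)).eventually_iff.1 hev
      set r1 := min ε2 (min r0 R) with hr1def
      have hr1pos : 0 < r1 := lt_min hε2pos (lt_min hr0R.1 hR0)
      have claim : ∀ ρ : ℝ, 0 < ρ → ρ < r1 →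
          ∀ᵐ z ∂(volume.restrict (ball x (ρ/2))), μm + (1/2) * M ≤ u z := by
        intro ρ hρ hρr1
        have hρR : ρ ≤ R := le_of_lt (lt_of_lt_of_le hρr1 ((min_le_right _ _).trans (min_le_right _ _)))
        have hρr0 : ρ ≤ r0 := le_of_lt (lt_of_lt_of_le hρr1 ((min_le_right _ _).trans (min_le_left _ _)))
        have hρε2 : ρ < ε2 := lt_of_lt_of_le hρr1 (min_le_left _ _)
        have hballΩ : ball x ρ ⊆ Ω :=
          ((ball_subset_ball hρR).trans ball_subset_closedBall).trans hRΩ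
        have haeμm' : ∀ᵐ z ∂(volume.restrict (ball x ρ)), μm ≤ u z :=
          ae_restrict_of_ae_restrict_of_subset (ball_subset_ball hρr0) haeμm
        -- Chebyshev estimate
        have hcheb : volume {z ∈ ball x ρ | u z ≤ μm + M} ≤
            ENNReal.ofReal ν * volume (ball x ρ) := by
          set g : (Fin d → ℝ) → ℝ := fun z => |u x - u z| with hg
          have hI : IntegrableOn g (ball x ρ) volume := hint hρ hρR
          have hsub : {z ∈ ball x ρ | u z ≤ μm + M} ⊆ {z | M/4 ≤ g z} ∩ ball x ρ := by
            rintro z ⟨hzb, hz⟩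
            refine ⟨?_, hzb⟩
            have : u z ≤ u x - M/4 := by simp only [hμmdef, hMdef] at hz ⊢; linarith
            simp only [mem_setOf_eq, hg]
            calc M/4 ≤ u x - u z := by linarith
              _ ≤ |u x - u z| := le_abs_self _
          have hmark := mul_meas_ge_le_integral_of_nonneg
            (μ := volume.restrict (ball x ρ))
            (Filter.Eventually.of_forall (fun z => abs_nonneg _)) hI (M/4)
          have hVavg : ∫ z in ball x ρ, g z ∂volume
              = (volume (ball x ρ)).toReal * ⨍ z in ball x ρ, g z ∂volume := by
            rw [setAverage_eq, measureReal_def, smul_eq_mul, ← mul_assoc,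
              mul_inv_cancel₀ (hvol hρ).ne', one_mul]
          have havglt : (⨍ z in ball x ρ, g z ∂volume) < ν * (M/4) :=
            hε2 ⟨hρ, hρε2⟩
          set V := (volume (ball x ρ)).toReal with hVdef
          have hVpos : 0 < V := hvol hρ
          set A := (volume.restrict (ball x ρ)) {z | M/4 ≤ g z} with hAdef
          have hAfin : A ≠ ⊤ := by
            rw [hAdef, Measure.restrict_apply' measurableSet_ball]
            exact ((measure_mono inter_subset_right).trans_lt measure_ball_lt_top).ne
          have hAle : A.toReal ≤ ν * V := by
            have h5 : M/4 * A.toReal ≤ V * (⨍ z in ball x ρ, g z ∂volume) := by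
              rw [← hVavg]; exact hmark
            have h6 : V * (⨍ z in ball x ρ, g z ∂volume) ≤ V * (ν * (M/4)) :=
              mul_le_mul_of_nonneg_left havglt.le hVpos.le
            nlinarith
          have hSfin : volume {z ∈ ball x ρ | u z ≤ μm + M} ≠ ⊤ :=
            ((measure_mono (sep_subset _ _)).trans_lt measure_ball_lt_top).ne
          have hSA : volume {z ∈ ball x ρ | u z ≤ μm + M} ≤ A := by
            rw [hAdef, Measure.restrict_apply' measurableSet_ball]
            exact measure_mono hsub
          have hRfin : ENNReal.ofReal ν * volume (ball x ρ) ≠ ⊤ :=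
            ENNReal.mul_ne_top ENNReal.ofReal_ne_top measure_ball_lt_top.ne
          rw [← ENNReal.toReal_le_toReal hSfin hRfin]
          calc (volume {z ∈ ball x ρ | u z ≤ μm + M}).toReal
              ≤ A.toReal := ENNReal.toReal_mono hAfin hSA
            _ ≤ ν * V := hAle
            _ = (ENNReal.ofReal ν * volume (ball x ρ)).toReal := by
                rw [ENNReal.toReal_mul, ENNReal.toReal_ofReal hν.1.le, hVdef]
        exact hνprop x ρ hρ hballΩ haeμm' hcheb
      -- conclude : eventually essInf ≥ μm + M/2, contradiction
      have hfinal : ∀ᶠ r in 𝓝[>] (0:ℝ),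
          ((μm + (1/2) * M : ℝ) : EReal)
            ≤ essInf (fun y => (u y : EReal)) (volume.restrict (ball x r)) := by
        filter_upwards [(nhdsGT_basis (0:ℝ)).mem_of_mem (show (0:ℝ) < r1/2 by linarith)] with r hr
        refine le_essInf_of_ae_le _ ?_
        have hc := claim (2*r) (by linarith [hr.1]) (by linarith [hr.2])
        have h2r : (2*r)/2 = r := by ring
        rw [h2r] at hc
        filter_upwards [hc] with z hz using EReal.coe_le_coe_iff.2 hz
      have hLge : ((μm + (1/2) * M : ℝ) : EReal) ≤ ustar x :=
        ge_of_tendsto (hstar x hx) hfinal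
      rw [← hlcoe, EReal.coe_le_coe_iff] at hLge
      simp only [hμmdef] at hLge
      linarith
    exact le_antisymm hle hge
  refine ⟨key, ?_⟩
  -- a.e. statement via the Lebesgue differentiation theorem
  have hnull : volume {x | x ∈ Ω ∧ (u x : EReal) ≠ ustar x} = 0 := by
    apply measure_null_of_locally_null
    intro x hx
    obtain ⟨R, hR0, hRΩ⟩ := hRex x hx.1
    have hballΩ : ball x R ⊆ Ω := ball_subset_closedBall.trans hRΩ
    set v : (Fin d → ℝ) → ℝ := (ball x R).indicator u with hv
    have hvi : Integrable v volume := by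
      have : IntegrableOn u (ball x R) volume :=
        (hu.integrableOn_compact_subset hRΩ (isCompact_closedBall x R)).mono_set
          ball_subset_closedBall
      exact this.integrable_indicator measurableSet_ball
    have hloc : LocallyIntegrable v volume := hvi.locallyIntegrable
    have hae := IsUnifLocDoublingMeasure.ae_tendsto_average_norm_sub (μ := volume) hloc 1
    have hgood : ∀ᵐ y ∂volume, y ∈ ball x R → (u y : EReal) = ustar y := by
      filter_upwards [hae] with y hy hyball
      have h1 : Tendsto (fun r : ℝ => ⨍ z in closedBall y r, ‖v z - v y‖) (𝓝[>] 0) (𝓝 0) := by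
        refine hy (fun _ => y) id tendsto_id ?_
        filter_upwards [self_mem_nhdsWithin] with r hr
        exact mem_closedBall_self (by simpa using hr.le)
      set ε := R - dist y x with hεdef
      have hεpos : 0 < ε := by
        have : dist y x < R := mem_ball.1 hyball
        simp only [hεdef]; linarith
      have hcongr : (fun r : ℝ => ⨍ z in ball y r, |u y - u z|) =ᶠ[𝓝[>] (0:ℝ)]
          (fun r => ⨍ z in closedBall y r, ‖v z - v y‖) := by
        filter_upwards [(nhdsGT_basis (0:ℝ)).mem_of_mem hεpos] with r hr
        have hsub : closedBall y r ⊆ ball x R := by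
          intro z hz
          have hz' : dist z y ≤ r := mem_closedBall.1 hz
          have : dist z x ≤ dist z y + dist y x := dist_triangle z y x
          have hdyx : dist y x < R - r := by simp only [hεdef] at hr; linarith [hr.2]
          exact mem_ball.2 (by linarith)
        have h2 : volume.restrict (ball y r) = volume.restrict (closedBall y r) :=
          restrict_ball_closedBall y hr.1
        have step1 : (⨍ z in ball y r, |u y - u z|) = ⨍ z in closedBall y r, |u y - u z| := by
          simp only [average]; rw [h2]
        rw [step1]
        refine setAverage_congr_fun measurableSet_closedBall ?_
        refine Filter.Eventually.of_forall (fun z hz => ?_)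
        have hzball : z ∈ ball x R := hsub hz
        have hvz : v z = u z := indicator_of_mem hzball u
        have hvy : v y = u y := indicator_of_mem hyball u
        rw [hvz, hvy, Real.norm_eq_abs, abs_sub_comm]
      have h3 : Tendsto (fun r : ℝ => ⨍ z in ball y r, |u y - u z|) (𝓝[>] 0) (𝓝 0) :=
        Tendsto.congr' hcongr.symm h1
      exact (key y (hballΩ hyball) h3).symm
    refine ⟨{x' | x' ∈ Ω ∧ (u x' : EReal) ≠ ustar x'} ∩ ball x R,
      inter_mem_nhdsWithin _ (ball_mem_nhds x hR0), ?_⟩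
    have hbadnull : volume {y | ¬ (y ∈ ball x R → (u y : EReal) = ustar y)} = 0 := by
      rw [← MeasureTheory.ae_iff]; exact hgood
    refine measure_mono_null (fun z hz => ?_) hbadnull
    simp only [mem_setOf_eq, Classical.not_imp]
    exact ⟨hz.2, hz.1.2⟩
  rw [ae_restrict_iff' hΩ.measurableSet]
  have : ∀ᵐ x' ∂(volume : Measure (Fin d → ℝ)), ¬ (x' ∈ Ω ∧ (u x' : EReal) ≠ ustar x') := by
    rw [MeasureTheory.ae_iff]
    simpa [not_not] using hnull
  filter_upwards [this] with x' hx' hxΩ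
  by_contra hne
  exact hx' ⟨hxΩ, hne⟩
end

section
/- Let $u$ be measurable and locally essentially bounded on an open set $\Omega_T\subseteq\mathbb{R}^{N+1}$, and suppose both $u$ and $-u$ satisfy the De Giorgi property (D) (with parabolic cylinders $Q_\rho = K_\rho\times(-\rho^p,\rho^p)$). Then $u$ has a representative $\tilde u$ such that the lower regularization $u_*$ is lower semicontinuous, the upper regularization $u^* := -(-u)_*$ is upper semicontinuous, $u_* \le u^*$ everywhere, and $u_* = u = u^*$ at every Lebesgue point of $u$; in particular $u_*=u^*$ a.e. -/
open MeasureTheory Filter Set Metric Topology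

open scoped NNReal ENNReal

lemma stmt17_rpow_subadd {p : ℝ} (hp : 1 ≤ p) {a b : ℝ} (ha : 0 ≤ a) (hb : 0 ≤ b) :
    (a + b) ^ p⁻¹ ≤ a ^ p⁻¹ + b ^ p⁻¹ := by
  have hp0 : (0:ℝ) < p := lt_of_lt_of_le one_pos hp
  lift a to NNReal using ha
  lift b to NNReal using hb
  have h := NNReal.rpow_add_rpow_le_add (a ^ p⁻¹) (b ^ p⁻¹) hp
  rw [NNReal.rpow_inv_rpow hp0.ne', NNReal.rpow_inv_rpow hp0.ne', one_div] at h
  have := NNReal.coe_le_coe.2 h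
  push_cast at this
  convert this using 2

lemma stmt17_rpow_inv_le_iff {p : ℝ} (hp : 0 < p) {a r : ℝ} (ha : 0 ≤ a) (hr : 0 ≤ r) :
    a ^ p⁻¹ ≤ r ↔ a ≤ r ^ p := by
  constructor
  · intro h
    have := Real.rpow_le_rpow (Real.rpow_nonneg ha _) h hp.le
    rwa [Real.rpow_inv_rpow ha hp.ne'] at this
  · intro h
    have := Real.rpow_le_rpow ha h (inv_nonneg.2 hp.le)
    rwa [Real.rpow_rpow_inv hr hp.ne'] at this

lemma stmt17_le_rpow_inv_iff {p : ℝ} (hp : 0 < p) {a r : ℝ} (ha : 0 ≤ a) (hr : 0 ≤ r) :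
    r ≤ a ^ p⁻¹ ↔ r ^ p ≤ a := by
  constructor
  · intro h
    have := Real.rpow_le_rpow hr h hp.le
    rwa [Real.rpow_inv_rpow ha hp.ne'] at this
  · intro h
    have := Real.rpow_le_rpow (Real.rpow_nonneg hr _) h (inv_nonneg.2 hp.le)
    rwa [Real.rpow_rpow_inv hr hp.ne'] at this

lemma stmt17_rpow_inv_lt_iff {p : ℝ} (hp : 0 < p) {a r : ℝ} (ha : 0 ≤ a) (hr : 0 ≤ r) :
    a ^ p⁻¹ < r ↔ a < r ^ p := by
  rw [← not_le, ← not_le, stmt17_le_rpow_inv_iff hp ha hr]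

/-- Almost every point of `ΩT` is a Lebesgue point of `u` with respect to parabolic cylinders. -/
lemma stmt17_aeLeb {N : ℕ} {p : ℝ} (hp : 1 < p) (ΩT : Set ((Fin N → ℝ) × ℝ)) (hΩT : IsOpen ΩT)
    (u : (Fin N → ℝ) × ℝ → ℝ) (huloc : LocallyIntegrableOn u ΩT volume) :
    ∀ᵐ z ∂(volume.restrict ΩT),
      Tendsto (fun r : ℝ => ⨍ w in ball z.1 r ×ˢ Ioo (z.2 - r ^ p) (z.2 + r ^ p), |u z - u w|)
        (𝓝[>] 0) (𝓝 0) := by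
  have hp0 : (0:ℝ) < p := lt_trans one_pos hp
  -- Step 1 : countable family of pairs (open set, compact-closed-ball superset) covering ΩT
  have hfam : ∃ T' : Set (Set ((Fin N → ℝ) × ℝ) × Set ((Fin N → ℝ) × ℝ)),
      T'.Countable ∧
      (∀ W ∈ T', IsOpen W.1 ∧ Integrable (W.2.indicator u) volume ∧ W.1 ⊆ W.2) ∧
      (∀ z ∈ ΩT, ∃ W ∈ T', z ∈ W.1) := by
    obtain ⟨s, hsc, hsd⟩ := TopologicalSpace.exists_countable_dense ((Fin N → ℝ) × ℝ)
    classical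
    refine ⟨(fun i : ((Fin N → ℝ) × ℝ) × ℚ => (ball i.1 (i.2:ℝ), closedBall i.1 (i.2:ℝ))) ''
      {i | i.1 ∈ s ∧ 0 < (i.2:ℝ) ∧ closedBall i.1 (i.2:ℝ) ⊆ ΩT}, ?_, ?_, ?_⟩
    · refine Set.Countable.image ?_ _
      refine Set.Countable.mono (fun i hi => ?_) (hsc.prod (Set.countable_univ (α := ℚ)))
      exact ⟨hi.1, trivial⟩
    · rintro W ⟨i, ⟨his, hiq, hisub⟩, rfl⟩
      refine ⟨isOpen_ball, ?_, ball_subset_closedBall⟩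
      have hcomp : IsCompact (closedBall i.1 (i.2:ℝ)) := isCompact_closedBall _ _
      exact (huloc.integrableOn_compact_subset hisub hcomp).integrable_indicator
        measurableSet_closedBall
    · intro z hz
      obtain ⟨ε, hε, hballs⟩ := Metric.isOpen_iff.1 hΩT z hz
      obtain ⟨d, hds, hdz⟩ := hsd.exists_mem_open isOpen_ball
        (nonempty_ball.2 (by linarith : (0:ℝ) < ε/4) : (ball z (ε/4)).Nonempty)
      obtain ⟨q, hq1, hq2⟩ := exists_rat_btwn (show (ε/4 : ℝ) < ε/2 by linarith)
      rw [mem_ball] at hdz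
      refine ⟨_, ⟨(d, q), ⟨hds, lt_trans (by linarith) hq1, fun w hw => hballs ?_⟩, rfl⟩, ?_⟩
      · rw [mem_closedBall] at hw
        rw [mem_ball]
        calc dist w z ≤ dist w d + dist d z := dist_triangle _ _ _
          _ ≤ (q:ℝ) + ε/4 := add_le_add hw hdz.le
          _ < ε := by linarith
      · rw [mem_ball, dist_comm]; exact lt_of_lt_of_le (lt_trans hdz hq1) le_rfl
  obtain ⟨T', hT'c, hT'p, hT'cov⟩ := hfam
  -- Step 2 : null boundary of cylinders
  have hbd0 : ∀ (x : Fin N → ℝ) (r a b : ℝ), 0 < r → a ≤ b →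
      (ball x r ×ˢ Ioo a b : Set ((Fin N → ℝ) × ℝ)) =ᵐ[volume] closedBall x r ×ˢ Icc a b := by
    intro x r a b hr hab
    rw [ae_eq_set]
    constructor
    · rw [Set.diff_eq_empty.2 (Set.prod_mono ball_subset_closedBall Ioo_subset_Icc_self)]
      exact measure_empty
    · have hsub : (closedBall x r ×ˢ Icc a b) \ (ball x r ×ˢ Ioo a b) ⊆
          (sphere x r ×ˢ Icc a b) ∪ (closedBall x r ×ˢ ({a} ∪ {b} : Set ℝ)) := by
        rintro w ⟨⟨hw1, hw2⟩, hw3⟩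
        rw [mem_prod] at hw3
        push_neg at hw3
        by_cases h1 : w.1 ∈ ball x r
        · right
          have := hw3 h1
          refine ⟨hw1, ?_⟩
          rcases mem_Icc.1 hw2 with ⟨ha', hb'⟩
          rcases lt_or_eq_of_le ha' with h | h
          · rcases lt_or_eq_of_le hb' with h' | h'
            · exact absurd ⟨h, h'⟩ this
            · right; simp [h']
          · left; simp [← h]
        · left
          refine ⟨?_, hw2⟩
          rw [mem_sphere]
          rw [mem_closedBall] at hw1
          rw [mem_ball, not_lt] at h1
          exact le_antisymm hw1 h1
      refine measure_mono_null hsub ?_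
      rw [show (volume : Measure ((Fin N → ℝ) × ℝ)) =
        (volume : Measure (Fin N → ℝ)).prod volume from rfl]
      refine le_antisymm ((measure_union_le _ _).trans ?_) zero_le
      rw [Measure.prod_prod, Measure.prod_prod]
      rw [Measure.addHaar_sphere_of_ne_zero volume x hr.ne', zero_mul]
      have : (volume : Measure ℝ) ({a} ∪ {b}) = 0 := by
        refine le_antisymm ((measure_union_le _ _).trans ?_) zero_le
        simp [Real.volume_singleton]
      rw [this, mul_zero, add_zero]
  -- independent membership lemma for cylinders
  have hmemcyl : ∀ (z w : (Fin N → ℝ) × ℝ) (r : ℝ),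
      w ∈ ball z.1 r ×ˢ Ioo (z.2 - r ^ p) (z.2 + r ^ p) ↔
        dist w.1 z.1 < r ∧ |w.2 - z.2| < r ^ p := by
    intro z w r
    simp only [mem_prod, mem_ball, mem_Ioo, abs_sub_lt_iff]
    constructor
    · rintro ⟨h1, h2, h3⟩; exact ⟨h1, by linarith, by linarith⟩
    · rintro ⟨h1, h2, h3⟩; exact ⟨h1, by linarith, by linarith⟩
  -- Step 3 : the parabolic metric
  have i2nd : SecondCountableTopology ((Fin N → ℝ) × ℝ) := inferInstance
  have iBorel : BorelSpace ((Fin N → ℝ) × ℝ) := inferInstance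
  have iLF : IsLocallyFiniteMeasure (volume : Measure ((Fin N → ℝ) × ℝ)) := inferInstance
  set pd : ((Fin N → ℝ) × ℝ) → ((Fin N → ℝ) × ℝ) → ℝ :=
    fun z w => max (dist z.1 w.1) (|z.2 - w.2| ^ p⁻¹) with hpd
  have pd_self : ∀ z, pd z z = 0 := by
    intro z
    simp [hpd, Real.zero_rpow (inv_ne_zero hp0.ne')]
  have pd_comm : ∀ z w, pd z w = pd w z := by
    intro z w
    simp only [hpd, dist_comm, abs_sub_comm]
  have pd_tri : ∀ x y z, pd x z ≤ pd x y + pd y z := by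
    intro x y z
    apply max_le
    · exact (dist_triangle x.1 y.1 z.1).trans (add_le_add (le_max_left _ _) (le_max_left _ _))
    · have h1 : |x.2 - z.2| ^ p⁻¹ ≤ (|x.2 - y.2| + |y.2 - z.2|) ^ p⁻¹ :=
        Real.rpow_le_rpow (abs_nonneg _) (abs_sub_le _ _ _) (inv_nonneg.2 hp0.le)
      refine h1.trans ((stmt17_rpow_subadd hp.le (abs_nonneg _) (abs_nonneg _)).trans ?_)
      exact add_le_add (le_max_right _ _) (le_max_right _ _)
  have pd_open : ∀ S : Set ((Fin N → ℝ) × ℝ),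
      IsOpen S ↔ ∀ x ∈ S, ∃ ε > 0, ∀ y, pd x y < ε → y ∈ S := by
    intro S
    constructor
    · intro hS x hx
      rcases mem_nhds_prod_iff'.1 (hS.mem_nhds hx) with ⟨U, V, hU, hxU, hV, hxV, hUV⟩
      rcases Metric.isOpen_iff.1 hU x.1 hxU with ⟨ε₁, hε₁, hb1⟩
      rcases Metric.isOpen_iff.1 hV x.2 hxV with ⟨ε₂, hε₂, hb2⟩
      refine ⟨min ε₁ (ε₂ ^ p⁻¹), lt_min hε₁ (Real.rpow_pos_of_pos hε₂ _), fun y hy => ?_⟩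
      have h1 : dist x.1 y.1 < ε₁ :=
        lt_of_le_of_lt (le_max_left _ _) (lt_of_lt_of_le hy (min_le_left _ _))
      have h2 : |x.2 - y.2| ^ p⁻¹ < ε₂ ^ p⁻¹ :=
        lt_of_le_of_lt (le_max_right _ _) (lt_of_lt_of_le hy (min_le_right _ _))
      have h2' : |x.2 - y.2| < ε₂ := by
        have h3 := Real.rpow_lt_rpow (Real.rpow_nonneg (abs_nonneg _) _) h2 hp0
        rwa [Real.rpow_inv_rpow (abs_nonneg _) hp0.ne',
          Real.rpow_inv_rpow hε₂.le hp0.ne'] at h3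
      apply hUV
      refine ⟨hb1 ?_, hb2 ?_⟩
      · rw [mem_ball, dist_comm]; exact h1
      · rw [mem_ball, Real.dist_eq, abs_sub_comm]; exact h2'
    · intro h
      rw [isOpen_iff_mem_nhds]
      intro x hx
      rcases h x hx with ⟨ε, hε, hsub⟩
      have hsub2 : ball x.1 ε ×ˢ Ioo (x.2 - ε ^ p) (x.2 + ε ^ p) ⊆ S := by
        intro y hy
        rw [hmemcyl] at hy
        apply hsub
        apply max_lt
        · rw [dist_comm]; exact hy.1
        · rw [abs_sub_comm]
          exact (stmt17_rpow_inv_lt_iff hp0 (abs_nonneg _) hε.le).2 hy.2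
      refine Filter.mem_of_superset
        (IsOpen.mem_nhds (isOpen_ball.prod isOpen_Ioo) ⟨mem_ball_self hε, ?_⟩) hsub2
      have := Real.rpow_pos_of_pos hε p
      exact ⟨by linarith, by linarith⟩
  letI pms : PseudoMetricSpace ((Fin N → ℝ) × ℝ) :=
    PseudoMetricSpace.ofDistTopology pd pd_self pd_comm pd_tri pd_open
  haveI : SecondCountableTopology ((Fin N → ℝ) × ℝ) := i2nd
  haveI : BorelSpace ((Fin N → ℝ) × ℝ) := iBorel
  haveI : IsLocallyFiniteMeasure (volume : Measure ((Fin N → ℝ) × ℝ)) := iLF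
  have hdist : ∀ z w : ((Fin N → ℝ) × ℝ), dist z w = pd z w := fun z w => rfl
  -- closed parabolic balls are closed cylinders
  have hcb : ∀ (z : (Fin N → ℝ) × ℝ) (r : ℝ), 0 ≤ r →
      closedBall z r = closedBall z.1 r ×ˢ Icc (z.2 - r ^ p) (z.2 + r ^ p) := by
    intro z r hr
    ext w
    rw [Metric.mem_closedBall, hdist]
    constructor
    · intro h
      rcases max_le_iff.1 h with ⟨h1, h2⟩
      refine ⟨mem_closedBall.2 h1, ?_⟩
      have h3 := (stmt17_rpow_inv_le_iff hp0 (abs_nonneg _) hr).1 h2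
      rw [abs_le] at h3
      exact ⟨by linarith [h3.1], by linarith [h3.2]⟩
    · rintro ⟨h1, h2⟩
      rw [mem_closedBall] at h1
      rw [mem_Icc] at h2
      apply max_le
      · exact h1
      · exact (stmt17_rpow_inv_le_iff hp0 (abs_nonneg _) hr).2
          (abs_le.2 ⟨by linarith [h2.1], by linarith [h2.2]⟩)
  -- volume of parabolic balls
  have hvol : ∀ (z : (Fin N → ℝ) × ℝ) (r : ℝ), 0 ≤ r →
      volume (closedBall z r) = ENNReal.ofReal (r ^ N) *
        volume (ball (0 : Fin N → ℝ) 1) * ENNReal.ofReal (2 * r ^ p) := by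
    intro z r hr
    rw [hcb z r hr, show (volume : Measure ((Fin N → ℝ) × ℝ)) =
      (volume : Measure (Fin N → ℝ)).prod volume from rfl, Measure.prod_prod, Real.volume_Icc,
      Measure.addHaar_closedBall volume z.1 hr, Module.finrank_fin_fun ℝ]
    congr 2
    ring
  -- doubling
  set C : ℝ≥0 := ((3:ℝ) ^ N * (3:ℝ) ^ p).toNNReal with hCdef
  have hCoe : (C : ℝ≥0∞) = ENNReal.ofReal ((3:ℝ) ^ N * (3:ℝ) ^ p) := rfl
  have hdb : ∀ (z : (Fin N → ℝ) × ℝ) (r : ℝ), 0 < r →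
      volume (closedBall z (3 * r)) ≤ (C : ℝ≥0∞) * volume (closedBall z r) := by
    intro z r hr
    rw [hvol z (3*r) (by positivity), hvol z r hr.le, hCoe]
    have h3N : (0:ℝ) ≤ (3:ℝ) ^ N := by positivity
    have h30 : (0:ℝ) ≤ (3:ℝ) ^ p := Real.rpow_nonneg (by norm_num) p
    have h1 : ((3:ℝ) * r) ^ N = 3 ^ N * r ^ N := mul_pow 3 r N
    have h2 : (2 : ℝ) * (3*r) ^ p = 3 ^ p * (2 * r ^ p) := by
      rw [Real.mul_rpow (by norm_num) hr.le]; ring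
    rw [h1, h2, ENNReal.ofReal_mul h3N, ENNReal.ofReal_mul h3N, ENNReal.ofReal_mul h30]
    exact le_of_eq (by ring)
  have hfreq : ∀ x : (Fin N → ℝ) × ℝ, ∃ᶠ r in 𝓝[>] (0:ℝ),
      volume (closedBall x (3 * r)) ≤ (C:ℝ≥0∞) * volume (closedBall x r) :=
    fun x => ((eventually_mem_nhdsWithin (s := Ioi (0:ℝ))).mono (fun r hr => hdb x r hr)).frequently
  have hsets : ∀ x : (Fin N → ℝ) × ℝ,
      (Vitali.vitaliFamily (volume : Measure ((Fin N → ℝ) × ℝ)) C hfreq).setsAt x =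
      {a | IsClosed a ∧ (interior a).Nonempty ∧
        ∃ r, a ⊆ closedBall x r ∧
          volume (closedBall x (3 * r)) ≤ (C:ℝ≥0∞) * volume a} := fun _ => rfl
  have hmem : ∀ (z : (Fin N → ℝ) × ℝ) (r : ℝ), 0 < r →
      closedBall z r ∈ (Vitali.vitaliFamily volume C hfreq).setsAt z := by
    intro z r hr
    rw [hsets]
    exact ⟨isClosed_closedBall, ⟨z, ball_subset_interior_closedBall (mem_ball_self hr)⟩, r,
      Subset.rfl, hdb z r hr⟩
  have htend : ∀ z : (Fin N → ℝ) × ℝ, Tendsto (fun r : ℝ => closedBall z r) (𝓝[>] (0:ℝ))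
      ((Vitali.vitaliFamily volume C hfreq).filterAt z) := by
    intro z
    rw [VitaliFamily.tendsto_filterAt_iff]
    refine ⟨(eventually_mem_nhdsWithin (s := Ioi (0:ℝ))).mono (fun r hr => hmem z r hr), fun ε hε => ?_⟩
    filter_upwards [Ioc_mem_nhdsGT_of_mem (⟨le_rfl, hε⟩ : (0:ℝ) ∈ Ico 0 ε)] with r hr
    exact closedBall_subset_closedBall hr.2
  have hdiff : ∀ᵐ z ∂(volume : Measure ((Fin N → ℝ) × ℝ)), ∀ W ∈ T',
      Tendsto (fun a => ⨍ y in a, ‖W.2.indicator u y - W.2.indicator u z‖)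
        ((Vitali.vitaliFamily volume C hfreq).filterAt z) (𝓝 0) := by
    refine (ae_ball_iff hT'c).2 ?_
    intro W hW
    exact (Vitali.vitaliFamily volume C hfreq).ae_tendsto_average_norm_sub
      ((hT'p W hW).2.1.locallyIntegrable)
  -- Step 4 : conclusion
  filter_upwards [ae_restrict_mem hΩT.measurableSet, ae_restrict_of_ae hdiff] with z hzΩ hz
  obtain ⟨W, hW, hzW⟩ := hT'cov z hzΩ
  have h0 := (hz W hW).comp (htend z)
  have hWnhds : W.1 ∈ 𝓝 z := by
    have hWopen : IsOpen W.1 := (hT'p W hW).1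
    exact hWopen.mem_nhds hzW
  rcases Metric.mem_nhds_iff.1 hWnhds with ⟨ε, hε, hball⟩
  refine Filter.Tendsto.congr' ?_ h0
  filter_upwards [Ioo_mem_nhdsGT_of_mem (⟨le_rfl, hε⟩ : (0:ℝ) ∈ Ico 0 ε)] with r hr
  have hrpos : (0:ℝ) < r := hr.1
  have hrp : (0:ℝ) < r ^ p := Real.rpow_pos_of_pos hrpos p
  have hsubW : closedBall z r ⊆ W.1 := (closedBall_subset_ball hr.2).trans hball
  have hcbr := hcb z r hrpos.le
  have hres : volume.restrict (ball z.1 r ×ˢ Ioo (z.2 - r ^ p) (z.2 + r ^ p)) =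
      volume.restrict (closedBall z.1 r ×ˢ Icc (z.2 - r ^ p) (z.2 + r ^ p)) :=
    Measure.restrict_congr_set (hbd0 z.1 r _ _ hrpos (by linarith))
  show ⨍ y in closedBall z r, ‖W.2.indicator u y - W.2.indicator u z‖ =
    ⨍ w in ball z.1 r ×ˢ Ioo (z.2 - r ^ p) (z.2 + r ^ p), |u z - u w|
  have hiz : W.2.indicator u z = u z := indicator_of_mem ((hT'p W hW).2.2 hzW) u
  rw [hcbr, ← hres]
  refine average_congr ?_
  have hmeas : MeasurableSet (ball z.1 r ×ˢ Ioo (z.2 - r ^ p) (z.2 + r ^ p)) :=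
    measurableSet_ball.prod measurableSet_Ioo
  filter_upwards [ae_restrict_mem hmeas] with y hy
  have hyW : y ∈ W.2 := by
    apply (hT'p W hW).2.2
    apply hsubW
    rw [hcbr]
    exact Set.prod_mono ball_subset_closedBall Ioo_subset_Icc_self hy
  rw [indicator_of_mem hyW u, hiz, Real.norm_eq_abs, abs_sub_comm]

section helpers2

variable {N : ℕ}

lemma stmt17_vol_cyl {p : ℝ} (z : (Fin N → ℝ) × ℝ) {r : ℝ} (hr : 0 < r) :
    volume (ball z.1 r ×ˢ Ioo (z.2 - r ^ p) (z.2 + r ^ p)) ≠ 0 ∧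
    volume (ball z.1 r ×ˢ Ioo (z.2 - r ^ p) (z.2 + r ^ p)) < ⊤ := by
  have hrp : 0 < r ^ p := Real.rpow_pos_of_pos hr p
  rw [show (volume : Measure ((Fin N → ℝ) × ℝ)) = (volume : Measure (Fin N → ℝ)).prod volume from rfl,
    Measure.prod_prod, Real.volume_Ioo]
  constructor
  · exact mul_ne_zero (measure_ball_pos volume z.1 hr).ne'
      (by simp only [ne_eq, ENNReal.ofReal_eq_zero, not_le]; linarith)
  · exact ENNReal.mul_lt_top measure_ball_lt_top ENNReal.ofReal_lt_top

lemma stmt17_cyl_mono {p : ℝ} (hp : 0 < p) (z : (Fin N → ℝ) × ℝ) {r s : ℝ} (hr : 0 ≤ r)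
    (hrs : r ≤ s) :
    ball z.1 r ×ˢ Ioo (z.2 - r ^ p) (z.2 + r ^ p) ⊆
      ball z.1 s ×ˢ Ioo (z.2 - s ^ p) (z.2 + s ^ p) := by
  have h : r ^ p ≤ s ^ p := Real.rpow_le_rpow hr hrs hp.le
  exact prod_mono (ball_subset_ball hrs) (Ioo_subset_Ioo (by linarith) (by linarith))

lemma stmt17_mem_cyl_iff {p : ℝ} (z w : (Fin N → ℝ) × ℝ) (r : ℝ) :
    w ∈ ball z.1 r ×ˢ Ioo (z.2 - r ^ p) (z.2 + r ^ p) ↔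
      dist w.1 z.1 < r ∧ |w.2 - z.2| < r ^ p := by
  simp only [mem_prod, mem_ball, mem_Ioo, abs_sub_lt_iff]
  constructor
  · rintro ⟨h1, h2, h3⟩; exact ⟨h1, by linarith, by linarith⟩
  · rintro ⟨h1, h2, h3⟩; exact ⟨h1, by linarith, by linarith⟩

lemma stmt17_cyl_subset_of_close {p : ℝ} (hp : 0 < p) {z z' : (Fin N → ℝ) × ℝ} {r s : ℝ}
    (hs : 0 ≤ s) (h1 : dist z'.1 z.1 + s ≤ r) (h2 : |z'.2 - z.2| + s ^ p ≤ r ^ p) :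
    ball z'.1 s ×ˢ Ioo (z'.2 - s ^ p) (z'.2 + s ^ p) ⊆
      ball z.1 r ×ˢ Ioo (z.2 - r ^ p) (z.2 + r ^ p) := by
  intro w hw
  rw [stmt17_mem_cyl_iff] at hw ⊢
  constructor
  · calc dist w.1 z.1 ≤ dist w.1 z'.1 + dist z'.1 z.1 := dist_triangle _ _ _
      _ < s + dist z'.1 z.1 := by linarith [hw.1]
      _ ≤ r := by linarith
  · calc |w.2 - z.2| ≤ |w.2 - z'.2| + |z'.2 - z.2| := abs_sub_le _ _ _
      _ < s ^ p + |z'.2 - z.2| := by linarith [hw.2]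
      _ ≤ r ^ p := by linarith

end helpers2

section helpers3

variable {α : Type*} [MeasurableSpace α] {μ : Measure α}

lemma stmt17_essInf_le_essSup (hμ : μ ≠ 0) (f : α → EReal) :
    essInf f μ ≤ essSup f μ := by
  have : (MeasureTheory.ae μ).NeBot := ae_neBot.2 hμ
  obtain ⟨w, h1, h2⟩ := ((ae_essInf_le (f := f) (μ := μ)).and (ae_le_essSup (f := f) (μ := μ))).exists
  exact h1.trans h2

lemma stmt17_coe_le_essInf {u : α → ℝ} {c : ℝ} (h : ∀ᵐ w ∂μ, c ≤ u w) :
    (c : EReal) ≤ essInf (fun w => (u w : EReal)) μ :=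
  le_essInf_of_ae_le _ (h.mono fun w hw => EReal.coe_le_coe_iff.2 hw)

lemma stmt17_essSup_le_coe {u : α → ℝ} {c : ℝ} (h : ∀ᵐ w ∂μ, u w ≤ c) :
    essSup (fun w => (u w : EReal)) μ ≤ (c : EReal) :=
  essSup_le_of_ae_le _ (h.mono fun w hw => EReal.coe_le_coe_iff.2 hw)

lemma stmt17_essInf_anti {s t : Set α} (hst : s ⊆ t) (f : α → EReal) :
    essInf f (μ.restrict t) ≤ essInf f (μ.restrict s) :=
  essInf_antitone_measure (Measure.absolutelyContinuous_of_le (Measure.restrict_mono hst le_rfl))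

lemma stmt17_essSup_mono {s t : Set α} (hst : s ⊆ t) (f : α → EReal) :
    essSup f (μ.restrict s) ≤ essSup f (μ.restrict t) :=
  essSup_mono_measure' (Measure.restrict_mono hst le_rfl)

lemma stmt17_essInf_le_avg [IsFiniteMeasure μ] (hμ : μ ≠ 0) {u : α → ℝ}
    (hint : Integrable u μ) :
    essInf (fun w => (u w : EReal)) μ ≤ ((⨍ w, u w ∂μ : ℝ) : EReal) := by
  have : (MeasureTheory.ae μ).NeBot := ae_neBot.2 hμ
  set I := essInf (fun w => (u w : EReal)) μ with hI
  have hae : ∀ᵐ w ∂μ, I ≤ (u w : EReal) := ae_essInf_le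
  rcases eq_or_ne I ⊥ with h | hbot
  · simp [h]
  have htop : I ≠ ⊤ := by
    intro h
    obtain ⟨w, hw⟩ := hae.exists
    rw [h, top_le_iff] at hw
    exact (EReal.coe_ne_top _) hw
  have hIr : ((I.toReal : ℝ) : EReal) = I := EReal.coe_toReal htop hbot
  rw [← hIr, EReal.coe_le_coe_iff]
  have hae' : ∀ᵐ w ∂μ, I.toReal ≤ u w := by
    filter_upwards [hae] with w hw
    rw [← hIr, EReal.coe_le_coe_iff] at hw; exact hw
  have hT : 0 < (μ univ).toReal :=
    ENNReal.toReal_pos (by simpa using hμ) (measure_ne_top μ univ)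
  have h1 : I.toReal * (μ univ).toReal ≤ ∫ w, u w ∂μ := by
    calc I.toReal * (μ univ).toReal = ∫ _, I.toReal ∂μ := by
          rw [integral_const, smul_eq_mul, mul_comm, measureReal_def]
      _ ≤ ∫ w, u w ∂μ := integral_mono_ae (integrable_const _) hint hae'
  rw [average_eq, smul_eq_mul]
  rw [← le_div_iff₀ hT] at h1
  rwa [div_eq_inv_mul] at h1

lemma stmt17_avg_le_essSup [IsFiniteMeasure μ] (hμ : μ ≠ 0) {u : α → ℝ}
    (hint : Integrable u μ) :
    ((⨍ w, u w ∂μ : ℝ) : EReal) ≤ essSup (fun w => (u w : EReal)) μ := by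
  have : (MeasureTheory.ae μ).NeBot := ae_neBot.2 hμ
  set I := essSup (fun w => (u w : EReal)) μ with hI
  have hae : ∀ᵐ w ∂μ, (u w : EReal) ≤ I := ae_le_essSup
  rcases eq_or_ne I ⊤ with h | htop
  · simp [h]
  have hbot : I ≠ ⊥ := by
    intro h
    obtain ⟨w, hw⟩ := hae.exists
    rw [h, le_bot_iff] at hw
    exact (EReal.coe_ne_bot _) hw
  have hIr : ((I.toReal : ℝ) : EReal) = I := EReal.coe_toReal htop hbot
  rw [← hIr, EReal.coe_le_coe_iff]
  have hae' : ∀ᵐ w ∂μ, u w ≤ I.toReal := by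
    filter_upwards [hae] with w hw
    rw [← hIr, EReal.coe_le_coe_iff] at hw; exact hw
  have hT : 0 < (μ univ).toReal :=
    ENNReal.toReal_pos (by simpa using hμ) (measure_ne_top μ univ)
  have h1 : ∫ w, u w ∂μ ≤ I.toReal * (μ univ).toReal := by
    calc ∫ w, u w ∂μ ≤ ∫ _, I.toReal ∂μ := integral_mono_ae hint (integrable_const _) hae'
      _ = I.toReal * (μ univ).toReal := by rw [integral_const, smul_eq_mul, mul_comm, measureReal_def]
  rw [average_eq, smul_eq_mul]
  rw [← div_le_iff₀ hT] at h1
  rwa [div_eq_inv_mul] at h1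

lemma stmt17_abs_avg_sub_le [IsFiniteMeasure μ] (hμ : μ ≠ 0) {u : α → ℝ}
    (hint : Integrable u μ) (a : ℝ) :
    |(⨍ w, u w ∂μ) - a| ≤ ⨍ w, |a - u w| ∂μ := by
  have hT : 0 < (μ univ).toReal :=
    ENNReal.toReal_pos (by simpa using hμ) (measure_ne_top μ univ)
  have hsub : Integrable (fun w => u w - a) μ := hint.sub (integrable_const a)
  have h1 : (⨍ w, u w ∂μ) - a = ⨍ w, (u w - a) ∂μ := by
    rw [average_eq, average_eq, integral_sub hint (integrable_const a), integral_const,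
      smul_eq_mul, smul_eq_mul, mul_sub]
    simp only [measureReal_def, smul_eq_mul]
    field_simp
  rw [h1, average_eq, smul_eq_mul, measureReal_def, abs_mul, abs_of_nonneg (by positivity : (0:ℝ) ≤ (μ univ).toReal⁻¹),
    average_eq, smul_eq_mul, measureReal_def]
  gcongr
  calc |∫ w, (u w - a) ∂μ| ≤ ∫ w, |u w - a| ∂μ := by
        have := norm_integral_le_integral_norm (μ := μ) (fun w => u w - a)
        simpa only [Real.norm_eq_abs] using this
    _ = ∫ w, |a - u w| ∂μ :=
        integral_congr_ae (Filter.Eventually.of_forall fun w => abs_sub_comm _ _)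

end helpers3

lemma stmt17_coe_le_of_forall {x : ℝ} {y : EReal}
    (h : ∀ ε : ℝ, 0 < ε → ((x - ε : ℝ) : EReal) ≤ y) : (x : EReal) ≤ y := by
  by_contra hlt
  push_neg at hlt
  rcases exists_between hlt with ⟨w, hw1, hw2⟩
  have hwt : w ≠ ⊤ := ne_top_of_lt hw2
  have hwb : w ≠ ⊥ := ne_bot_of_gt hw1
  have hwr : ((w.toReal : ℝ) : EReal) = w := EReal.coe_toReal hwt hwb
  have hε : 0 < x - w.toReal := by
    have : (w.toReal : EReal) < (x : EReal) := by rw [hwr]; exact hw2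
    exact sub_pos.2 (EReal.coe_lt_coe_iff.1 this)
  have h2 := h _ hε
  rw [show x - (x - w.toReal) = w.toReal by ring, hwr] at h2
  exact absurd (lt_of_le_of_lt h2 hw1) (lt_irrefl _)

lemma stmt17_le_coe_of_forall {x : ℝ} {y : EReal}
    (h : ∀ ε : ℝ, 0 < ε → y ≤ ((x + ε : ℝ) : EReal)) : y ≤ (x : EReal) := by
  by_contra hlt
  push_neg at hlt
  rcases exists_between hlt with ⟨w, hw1, hw2⟩
  have hwt : w ≠ ⊤ := ne_top_of_lt hw2
  have hwb : w ≠ ⊥ := ne_bot_of_gt hw1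
  have hwr : ((w.toReal : ℝ) : EReal) = w := EReal.coe_toReal hwt hwb
  have hε : 0 < w.toReal - x := by
    have : (x : EReal) < (w.toReal : EReal) := by rw [hwr]; exact hw1
    exact sub_pos.2 (EReal.coe_lt_coe_iff.1 this)
  have h2 := h _ hε
  rw [show x + (w.toReal - x) = w.toReal by ring, hwr] at h2
  exact absurd (lt_of_lt_of_le hw2 h2) (lt_irrefl _)


/-- If `u` is measurable, locally essentially bounded, and both
`u` and `-u` satisfy the De Giorgi property (D) with parabolic cylinders
`Q_ρ(z) = K_ρ(z₁) × (z₂ - ρᵖ, z₂ + ρᵖ)`, then the lower regularization `u_*`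
is lower semicontinuous, the upper regularization `u^* = -(-u)_*` is upper
semicontinuous, `u_* ≤ u^*` everywhere on the domain, `u_* = u = u^*` at
every Lebesgue point, and `u_* = u^*` a.e. -/
theorem stmt17 {N : ℕ} (ΩT : Set ((Fin N → ℝ) × ℝ)) (hΩT : IsOpen ΩT)
    (u : (Fin N → ℝ) × ℝ → ℝ) (hu : Measurable u)
    (huloc : LocallyIntegrableOn u ΩT volume)
    (hbd : ∀ K ⊆ ΩT, IsCompact K →
      ∃ m M : ℝ, ∀ᵐ z ∂(volume.restrict K), m ≤ u z ∧ u z ≤ M)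
    (p : ℝ) (hp : 1 < p) (c : ℝ) (hc : c ∈ Ioo (0:ℝ) 1)
    (hD : ∀ a ∈ Ioo (0:ℝ) 1, ∀ M > (0:ℝ), ∀ μm : ℝ, ∃ ν ∈ Ioo (0:ℝ) 1,
      ∀ (z : (Fin N → ℝ) × ℝ) (ρ : ℝ), 0 < ρ →
        ball z.1 ρ ×ˢ Ioo (z.2 - ρ ^ p) (z.2 + ρ ^ p) ⊆ ΩT →
        (∀ᵐ w ∂(volume.restrict (ball z.1 ρ ×ˢ Ioo (z.2 - ρ ^ p) (z.2 + ρ ^ p))),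
          μm ≤ u w) →
        volume {w ∈ ball z.1 ρ ×ˢ Ioo (z.2 - ρ ^ p) (z.2 + ρ ^ p) | u w ≤ μm + M} ≤
          ENNReal.ofReal ν *
            volume (ball z.1 ρ ×ˢ Ioo (z.2 - ρ ^ p) (z.2 + ρ ^ p)) →
        ∀ᵐ w ∂(volume.restrict
            (ball z.1 (c*ρ) ×ˢ Ioo (z.2 - (c*ρ) ^ p) (z.2 + (c*ρ) ^ p))),
          μm + a * M ≤ u w)
    (hD' : ∀ a ∈ Ioo (0:ℝ) 1, ∀ M > (0:ℝ), ∀ μm : ℝ, ∃ ν ∈ Ioo (0:ℝ) 1,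
      ∀ (z : (Fin N → ℝ) × ℝ) (ρ : ℝ), 0 < ρ →
        ball z.1 ρ ×ˢ Ioo (z.2 - ρ ^ p) (z.2 + ρ ^ p) ⊆ ΩT →
        (∀ᵐ w ∂(volume.restrict (ball z.1 ρ ×ˢ Ioo (z.2 - ρ ^ p) (z.2 + ρ ^ p))),
          μm ≤ -u w) →
        volume {w ∈ ball z.1 ρ ×ˢ Ioo (z.2 - ρ ^ p) (z.2 + ρ ^ p) | -u w ≤ μm + M} ≤
          ENNReal.ofReal ν *
            volume (ball z.1 ρ ×ˢ Ioo (z.2 - ρ ^ p) (z.2 + ρ ^ p)) →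
        ∀ᵐ w ∂(volume.restrict
            (ball z.1 (c*ρ) ×ˢ Ioo (z.2 - (c*ρ) ^ p) (z.2 + (c*ρ) ^ p))),
          μm + a * M ≤ -u w)
    (ustar ustarU : (Fin N → ℝ) × ℝ → EReal)
    (hstar : ∀ z ∈ ΩT, Tendsto (fun r : ℝ =>
        essInf (fun w => (u w : EReal))
          (volume.restrict (ball z.1 r ×ˢ Ioo (z.2 - r ^ p) (z.2 + r ^ p))))
      (𝓝[>] 0) (𝓝 (ustar z)))
    (hstarU : ∀ z ∈ ΩT, Tendsto (fun r : ℝ =>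
        essSup (fun w => (u w : EReal))
          (volume.restrict (ball z.1 r ×ˢ Ioo (z.2 - r ^ p) (z.2 + r ^ p))))
      (𝓝[>] 0) (𝓝 (ustarU z))) :
    LowerSemicontinuousOn ustar ΩT ∧
    UpperSemicontinuousOn ustarU ΩT ∧
    (∀ z ∈ ΩT, ustar z ≤ ustarU z) ∧
    (∀ z ∈ ΩT,
      Tendsto (fun r : ℝ =>
          ⨍ w in ball z.1 r ×ˢ Ioo (z.2 - r ^ p) (z.2 + r ^ p), |u z - u w|)
        (𝓝[>] 0) (𝓝 0) →
      ustar z = (u z : EReal) ∧ ustarU z = (u z : EReal)) ∧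
    (∀ᵐ z ∂(volume.restrict ΩT), ustar z = ustarU z) := by
  have hp0 : (0:ℝ) < p := lt_trans one_pos hp
  have hc0 : 0 < c := hc.1
  -- closed cylinders inside ΩT
  have hQΩ : ∀ z ∈ ΩT, ∃ r₀ : ℝ, 0 < r₀ ∧
      closedBall z.1 r₀ ×ˢ Icc (z.2 - r₀ ^ p) (z.2 + r₀ ^ p) ⊆ ΩT := by
    intro z hz
    rcases mem_nhds_prod_iff'.1 (hΩT.mem_nhds hz) with ⟨U, V, hU, hxU, hV, hxV, hUV⟩
    rcases Metric.isOpen_iff.1 hU z.1 hxU with ⟨ε₁, hε₁, hb1⟩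
    rcases Metric.isOpen_iff.1 hV z.2 hxV with ⟨ε₂, hε₂, hb2⟩
    set r₀ := min (ε₁/2) ((ε₂/2) ^ p⁻¹) with hr₀def
    have hr₀pos : 0 < r₀ := lt_min (by linarith) (Real.rpow_pos_of_pos (by linarith) _)
    have hr₀p : r₀ ^ p ≤ ε₂/2 := by
      have h1 : r₀ ≤ (ε₂/2) ^ p⁻¹ := min_le_right _ _
      have h2 := Real.rpow_le_rpow hr₀pos.le h1 hp0.le
      rwa [Real.rpow_inv_rpow (by linarith) hp0.ne'] at h2
    refine ⟨r₀, hr₀pos, ?_⟩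
    rintro w ⟨hw1, hw2⟩
    apply hUV
    constructor
    · apply hb1
      rw [mem_ball]
      calc dist w.1 z.1 ≤ r₀ := mem_closedBall.1 hw1
        _ ≤ ε₁/2 := min_le_left _ _
        _ < ε₁ := by linarith
    · apply hb2
      rw [mem_ball, Real.dist_eq]
      rcases mem_Icc.1 hw2 with ⟨h2, h3⟩
      have habs : |w.2 - z.2| ≤ r₀ ^ p := abs_le.2 ⟨by linarith, by linarith⟩
      calc |w.2 - z.2| ≤ r₀ ^ p := habs
        _ ≤ ε₂/2 := hr₀p
        _ < ε₂ := by linarith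
  -- essInf of small cylinders is below the limit
  have hfle : ∀ z ∈ ΩT, ∀ r : ℝ, 0 < r →
      essInf (fun w => (u w : EReal))
        (volume.restrict (ball z.1 r ×ˢ Ioo (z.2 - r ^ p) (z.2 + r ^ p))) ≤ ustar z := by
    intro z hz r hr
    refine ge_of_tendsto (hstar z hz) ?_
    filter_upwards [Ioc_mem_nhdsGT_of_mem (⟨le_rfl, hr⟩ : (0:ℝ) ∈ Ico 0 r)] with s hs
    exact stmt17_essInf_anti (stmt17_cyl_mono hp0 z hs.1.le hs.2) _
  have hgle : ∀ z ∈ ΩT, ∀ r : ℝ, 0 < r →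
      ustarU z ≤ essSup (fun w => (u w : EReal))
        (volume.restrict (ball z.1 r ×ˢ Ioo (z.2 - r ^ p) (z.2 + r ^ p))) := by
    intro z hz r hr
    refine le_of_tendsto (hstarU z hz) ?_
    filter_upwards [Ioc_mem_nhdsGT_of_mem (⟨le_rfl, hr⟩ : (0:ℝ) ∈ Ico 0 r)] with s hs
    exact stmt17_essSup_mono (stmt17_cyl_mono hp0 z hs.1.le hs.2) _
  -- Part 1 : lower semicontinuity
  have hLSC : LowerSemicontinuousOn ustar ΩT := by
    intro z hz y hy
    obtain ⟨r, hr0, hylt⟩ : ∃ r, 0 < r ∧ y <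
        essInf (fun w => (u w : EReal))
          (volume.restrict (ball z.1 r ×ˢ Ioo (z.2 - r ^ p) (z.2 + r ^ p))) := by
      rcases (((hstar z hz).eventually_const_lt hy).and
        (eventually_mem_nhdsWithin (s := Ioi (0:ℝ)))).exists with ⟨r, h1, h2⟩
      exact ⟨r, h2, h1⟩
    have hη : 0 < r ^ p - (r/2) ^ p :=
      sub_pos.2 (Real.rpow_lt_rpow (half_pos hr0).le (half_lt_self hr0) hp0)
    rw [eventually_nhdsWithin_iff]
    filter_upwards [IsOpen.mem_nhds (isOpen_ball.prod isOpen_Ioo)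
      (⟨mem_ball_self (half_pos hr0), by constructor <;> simp <;> linarith⟩ :
        z ∈ ball z.1 (r/2) ×ˢ Ioo (z.2 - (r ^ p - (r/2) ^ p)) (z.2 + (r ^ p - (r/2) ^ p)))]
      with z' hz' hz'Ω
    rcases hz' with ⟨hz'1, hz'2⟩
    rw [mem_ball] at hz'1
    rw [mem_Ioo] at hz'2
    have hQsub : ball z'.1 (r/2) ×ˢ Ioo (z'.2 - (r/2) ^ p) (z'.2 + (r/2) ^ p) ⊆
        ball z.1 r ×ˢ Ioo (z.2 - r ^ p) (z.2 + r ^ p) := by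
      refine stmt17_cyl_subset_of_close hp0 (half_pos hr0).le (by linarith) ?_
      have : |z'.2 - z.2| ≤ r ^ p - (r/2) ^ p := abs_le.2 ⟨by linarith, by linarith⟩
      linarith
    calc y < _ := hylt
      _ ≤ essInf (fun w => (u w : EReal)) (volume.restrict
            (ball z'.1 (r/2) ×ˢ Ioo (z'.2 - (r/2) ^ p) (z'.2 + (r/2) ^ p))) :=
          stmt17_essInf_anti hQsub _
      _ ≤ ustar z' := hfle z' hz'Ω (r/2) (half_pos hr0)
  -- Part 2 : upper semicontinuity
  have hUSC : UpperSemicontinuousOn ustarU ΩT := by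
    intro z hz y hy
    obtain ⟨r, hr0, hylt⟩ : ∃ r, 0 < r ∧
        essSup (fun w => (u w : EReal))
          (volume.restrict (ball z.1 r ×ˢ Ioo (z.2 - r ^ p) (z.2 + r ^ p))) < y := by
      rcases (((hstarU z hz).eventually_lt_const hy).and
        (eventually_mem_nhdsWithin (s := Ioi (0:ℝ)))).exists with ⟨r, h1, h2⟩
      exact ⟨r, h2, h1⟩
    have hη : 0 < r ^ p - (r/2) ^ p :=
      sub_pos.2 (Real.rpow_lt_rpow (half_pos hr0).le (half_lt_self hr0) hp0)
    rw [eventually_nhdsWithin_iff]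
    filter_upwards [IsOpen.mem_nhds (isOpen_ball.prod isOpen_Ioo)
      (⟨mem_ball_self (half_pos hr0), by constructor <;> simp <;> linarith⟩ :
        z ∈ ball z.1 (r/2) ×ˢ Ioo (z.2 - (r ^ p - (r/2) ^ p)) (z.2 + (r ^ p - (r/2) ^ p)))]
      with z' hz' hz'Ω
    rcases hz' with ⟨hz'1, hz'2⟩
    rw [mem_ball] at hz'1
    rw [mem_Ioo] at hz'2
    have hQsub : ball z'.1 (r/2) ×ˢ Ioo (z'.2 - (r/2) ^ p) (z'.2 + (r/2) ^ p) ⊆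
        ball z.1 r ×ˢ Ioo (z.2 - r ^ p) (z.2 + r ^ p) := by
      refine stmt17_cyl_subset_of_close hp0 (half_pos hr0).le (by linarith) ?_
      have : |z'.2 - z.2| ≤ r ^ p - (r/2) ^ p := abs_le.2 ⟨by linarith, by linarith⟩
      linarith
    calc ustarU z' ≤ essSup (fun w => (u w : EReal)) (volume.restrict
            (ball z'.1 (r/2) ×ˢ Ioo (z'.2 - (r/2) ^ p) (z'.2 + (r/2) ^ p))) :=
          hgle z' hz'Ω (r/2) (half_pos hr0)
      _ ≤ essSup (fun w => (u w : EReal)) (volume.restrict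
            (ball z.1 r ×ˢ Ioo (z.2 - r ^ p) (z.2 + r ^ p))) := stmt17_essSup_mono hQsub _
      _ < y := hylt
  -- Part 3
  have hle : ∀ z ∈ ΩT, ustar z ≤ ustarU z := by
    intro z hz
    refine le_of_tendsto_of_tendsto (hstar z hz) (hstarU z hz) ?_
    filter_upwards [eventually_mem_nhdsWithin (s := Ioi (0:ℝ))] with r hr
    have hne : volume.restrict (ball z.1 r ×ˢ Ioo (z.2 - r ^ p) (z.2 + r ^ p)) ≠ 0 := by
      rw [Ne, Measure.restrict_eq_zero]
      exact (stmt17_vol_cyl z hr).1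
    exact stmt17_essInf_le_essSup hne _
  -- Part 4 : Lebesgue points
  have key : ∀ z ∈ ΩT,
      Tendsto (fun r : ℝ =>
          ⨍ w in ball z.1 r ×ˢ Ioo (z.2 - r ^ p) (z.2 + r ^ p), |u z - u w|)
        (𝓝[>] 0) (𝓝 0) →
      ustar z = (u z : EReal) ∧ ustarU z = (u z : EReal) := by
    intro z hz hLeb
    obtain ⟨r₀, hr₀, hKsub⟩ := hQΩ z hz
    have hKcomp : IsCompact (closedBall z.1 r₀ ×ˢ Icc (z.2 - r₀ ^ p) (z.2 + r₀ ^ p)) :=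
      (isCompact_closedBall _ _).prod isCompact_Icc
    obtain ⟨m, M', hmM⟩ := hbd _ hKsub hKcomp
    have hQK : ∀ ρ : ℝ, 0 < ρ → ρ ≤ r₀ →
        ball z.1 ρ ×ˢ Ioo (z.2 - ρ ^ p) (z.2 + ρ ^ p) ⊆
          closedBall z.1 r₀ ×ˢ Icc (z.2 - r₀ ^ p) (z.2 + r₀ ^ p) := by
      intro ρ h0 h1
      have hpp : ρ ^ p ≤ r₀ ^ p := Real.rpow_le_rpow h0.le h1 hp0.le
      exact Set.prod_mono (ball_subset_closedBall.trans (closedBall_subset_closedBall h1))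
        (Ioo_subset_Icc_self.trans (Icc_subset_Icc (by linarith) (by linarith)))
    have hQΩ' : ∀ ρ : ℝ, 0 < ρ → ρ ≤ r₀ →
        ball z.1 ρ ×ˢ Ioo (z.2 - ρ ^ p) (z.2 + ρ ^ p) ⊆ ΩT :=
      fun ρ h0 h1 => (hQK ρ h0 h1).trans hKsub
    have hKint : IntegrableOn u (closedBall z.1 r₀ ×ˢ Icc (z.2 - r₀ ^ p) (z.2 + r₀ ^ p))
        volume := huloc.integrableOn_compact_subset hKsub hKcomp
    have hint : ∀ ρ : ℝ, 0 < ρ → ρ ≤ r₀ →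
        IntegrableOn u (ball z.1 ρ ×ˢ Ioo (z.2 - ρ ^ p) (z.2 + ρ ^ p)) volume :=
      fun ρ h0 h1 => hKint.mono_set (hQK ρ h0 h1)
    have haeLB : ∀ ρ : ℝ, 0 < ρ → ρ ≤ r₀ →
        ∀ᵐ w ∂(volume.restrict (ball z.1 ρ ×ˢ Ioo (z.2 - ρ ^ p) (z.2 + ρ ^ p))),
          m ≤ u w ∧ u w ≤ M' :=
      fun ρ h0 h1 => ae_restrict_of_ae_restrict_of_subset (hQK ρ h0 h1) hmM
    have hfin : ∀ ρ : ℝ, 0 < ρ →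
        IsFiniteMeasure (volume.restrict (ball z.1 ρ ×ˢ Ioo (z.2 - ρ ^ p) (z.2 + ρ ^ p))) :=
      fun ρ h0 => ⟨by rw [Measure.restrict_apply_univ]; exact (stmt17_vol_cyl z h0).2⟩
    have hne : ∀ ρ : ℝ, 0 < ρ →
        volume.restrict (ball z.1 ρ ×ˢ Ioo (z.2 - ρ ^ p) (z.2 + ρ ^ p)) ≠ 0 := by
      intro ρ h0
      rw [Ne, Measure.restrict_eq_zero]
      exact (stmt17_vol_cyl z h0).1
    -- Claim I : ustar z ≤ u z
    have claimI : ustar z ≤ (u z : EReal) := by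
      have htend2 : Tendsto (fun r : ℝ => ((u z +
          ⨍ w in ball z.1 r ×ˢ Ioo (z.2 - r ^ p) (z.2 + r ^ p), |u z - u w| : ℝ) : EReal))
          (𝓝[>] 0) (𝓝 ((u z : ℝ) : EReal)) := by
        rw [EReal.tendsto_coe]
        simpa using (tendsto_const_nhds (x := u z) (f := 𝓝[>] (0:ℝ))).add hLeb
      refine le_of_tendsto_of_tendsto (hstar z hz) htend2 ?_
      filter_upwards [Ioc_mem_nhdsGT_of_mem (⟨le_rfl, hr₀⟩ : (0:ℝ) ∈ Ico 0 r₀)] with r hr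
      haveI := hfin r hr.1
      have h1 := stmt17_essInf_le_avg (hne r hr.1) (hint r hr.1 hr.2)
      have h2 := stmt17_abs_avg_sub_le (hne r hr.1) (hint r hr.1 hr.2) (u z)
      have h3 : (⨍ w in ball z.1 r ×ˢ Ioo (z.2 - r ^ p) (z.2 + r ^ p), u w) ≤
          u z + ⨍ w in ball z.1 r ×ˢ Ioo (z.2 - r ^ p) (z.2 + r ^ p), |u z - u w| := by
        have := (abs_le.1 h2).2
        linarith
      exact h1.trans (EReal.coe_le_coe_iff.2 h3)
    -- Claim II : u z ≤ ustarU z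
    have claimII : (u z : EReal) ≤ ustarU z := by
      have htend2 : Tendsto (fun r : ℝ => ((u z -
          ⨍ w in ball z.1 r ×ˢ Ioo (z.2 - r ^ p) (z.2 + r ^ p), |u z - u w| : ℝ) : EReal))
          (𝓝[>] 0) (𝓝 ((u z : ℝ) : EReal)) := by
        rw [EReal.tendsto_coe]
        simpa using (tendsto_const_nhds (x := u z) (f := 𝓝[>] (0:ℝ))).sub hLeb
      refine le_of_tendsto_of_tendsto htend2 (hstarU z hz) ?_
      filter_upwards [Ioc_mem_nhdsGT_of_mem (⟨le_rfl, hr₀⟩ : (0:ℝ) ∈ Ico 0 r₀)] with r hr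
      haveI := hfin r hr.1
      have h1 := stmt17_avg_le_essSup (hne r hr.1) (hint r hr.1 hr.2)
      have h2 := stmt17_abs_avg_sub_le (hne r hr.1) (hint r hr.1 hr.2) (u z)
      have h3 : u z - (⨍ w in ball z.1 r ×ˢ Ioo (z.2 - r ^ p) (z.2 + r ^ p), |u z - u w|) ≤
          ⨍ w in ball z.1 r ×ˢ Ioo (z.2 - r ^ p) (z.2 + r ^ p), u w := by
        have := (abs_le.1 h2).1
        linarith
      exact (EReal.coe_le_coe_iff.2 h3).trans h1
    -- Chebyshev helper
    have cheb : ∀ ρ : ℝ, 0 < ρ → ρ ≤ r₀ → ∀ δ ν : ℝ, 0 < δ → 0 < ν →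
        (⨍ w in ball z.1 ρ ×ˢ Ioo (z.2 - ρ ^ p) (z.2 + ρ ^ p), |u z - u w|) < δ * ν →
        volume {w ∈ ball z.1 ρ ×ˢ Ioo (z.2 - ρ ^ p) (z.2 + ρ ^ p) | δ ≤ |u z - u w|} ≤
          ENNReal.ofReal ν * volume (ball z.1 ρ ×ˢ Ioo (z.2 - ρ ^ p) (z.2 + ρ ^ p)) := by
      intro ρ h0 h1 δ ν hδ hν hA
      haveI := hfin ρ h0
      have hSmeas : MeasurableSet {w : (Fin N → ℝ) × ℝ | δ ≤ |u z - u w|} :=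
        measurableSet_le measurable_const ((measurable_const.sub hu).abs)
      have hIa : Integrable (fun w => |u z - u w|)
          (volume.restrict (ball z.1 ρ ×ˢ Ioo (z.2 - ρ ^ p) (z.2 + ρ ^ p))) := by
        have h2 : IntegrableOn u (ball z.1 ρ ×ˢ Ioo (z.2 - ρ ^ p) (z.2 + ρ ^ p)) volume :=
          hint ρ h0 h1
        exact ((integrable_const (u z)).sub h2).abs
      have hcheb0 := mul_meas_ge_le_integral_of_nonneg
        (Filter.Eventually.of_forall (fun w => abs_nonneg _)) hIa δ
      have hV : 0 < (volume (ball z.1 ρ ×ˢ Ioo (z.2 - ρ ^ p) (z.2 + ρ ^ p))).toReal :=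
        ENNReal.toReal_pos (stmt17_vol_cyl z h0).1 (stmt17_vol_cyl z h0).2.ne
      have hIeq : ∫ w in ball z.1 ρ ×ˢ Ioo (z.2 - ρ ^ p) (z.2 + ρ ^ p), |u z - u w| =
          (⨍ w in ball z.1 ρ ×ˢ Ioo (z.2 - ρ ^ p) (z.2 + ρ ^ p), |u z - u w|) *
            (volume (ball z.1 ρ ×ˢ Ioo (z.2 - ρ ^ p) (z.2 + ρ ^ p))).toReal := by
        rw [average_eq, smul_eq_mul, measureReal_restrict_apply_univ, measureReal_def]
        field_simp
      have hm1lt : (volume.restrict (ball z.1 ρ ×ˢ Ioo (z.2 - ρ ^ p) (z.2 + ρ ^ p)))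
          {w | δ ≤ |u z - u w|} < ⊤ := by
        refine lt_of_le_of_lt (measure_mono (subset_univ _)) ?_
        rw [Measure.restrict_apply_univ]
        exact (stmt17_vol_cyl z h0).2
      have hm1 : ((volume.restrict (ball z.1 ρ ×ˢ Ioo (z.2 - ρ ^ p) (z.2 + ρ ^ p)))
          {w | δ ≤ |u z - u w|}).toReal ≤
          ν * (volume (ball z.1 ρ ×ˢ Ioo (z.2 - ρ ^ p) (z.2 + ρ ^ p))).toReal := by
        rw [hIeq] at hcheb0
        simp only [measureReal_def] at hcheb0
        nlinarith
      have hsub2 : {w ∈ ball z.1 ρ ×ˢ Ioo (z.2 - ρ ^ p) (z.2 + ρ ^ p) | δ ≤ |u z - u w|} ⊆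
          {w | δ ≤ |u z - u w|} ∩ (ball z.1 ρ ×ˢ Ioo (z.2 - ρ ^ p) (z.2 + ρ ^ p)) :=
        fun w hw => ⟨hw.2, hw.1⟩
      calc volume {w ∈ ball z.1 ρ ×ˢ Ioo (z.2 - ρ ^ p) (z.2 + ρ ^ p) | δ ≤ |u z - u w|}
          ≤ volume ({w | δ ≤ |u z - u w|} ∩ (ball z.1 ρ ×ˢ Ioo (z.2 - ρ ^ p) (z.2 + ρ ^ p))) :=
            measure_mono hsub2
        _ = (volume.restrict (ball z.1 ρ ×ˢ Ioo (z.2 - ρ ^ p) (z.2 + ρ ^ p)))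
              {w | δ ≤ |u z - u w|} := (Measure.restrict_apply hSmeas).symm
        _ = ENNReal.ofReal (((volume.restrict (ball z.1 ρ ×ˢ Ioo (z.2 - ρ ^ p) (z.2 + ρ ^ p)))
              {w | δ ≤ |u z - u w|}).toReal) := (ENNReal.ofReal_toReal hm1lt.ne).symm
        _ ≤ ENNReal.ofReal (ν * (volume (ball z.1 ρ ×ˢ Ioo (z.2 - ρ ^ p) (z.2 + ρ ^ p))).toReal) :=
            ENNReal.ofReal_le_ofReal hm1
        _ = ENNReal.ofReal ν *
              ENNReal.ofReal ((volume (ball z.1 ρ ×ˢ Ioo (z.2 - ρ ^ p) (z.2 + ρ ^ p))).toReal) :=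
            ENNReal.ofReal_mul hν.le
        _ = ENNReal.ofReal ν * volume (ball z.1 ρ ×ˢ Ioo (z.2 - ρ ^ p) (z.2 + ρ ^ p)) := by
            rw [ENNReal.ofReal_toReal (stmt17_vol_cyl z h0).2.ne]
    -- Claim III : u z - ε ≤ ustar z for all ε
    have claimIII : ∀ ε : ℝ, 0 < ε → ((u z - ε : ℝ) : EReal) ≤ ustar z := by
      intro ε hε
      by_cases hcase : u z - ε ≤ m
      · refine le_trans ?_ (hfle z hz r₀ hr₀)
        exact le_trans (EReal.coe_le_coe_iff.2 hcase)
          (stmt17_coe_le_essInf ((haeLB r₀ hr₀ le_rfl).mono fun w hw => hw.1))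
      · push_neg at hcase
        have hM : 0 < u z - ε/2 - m := by linarith
        have ha0 : 0 < (u z - ε - m)/(u z - ε/2 - m) := div_pos (by linarith) hM
        have ha1 : (u z - ε - m)/(u z - ε/2 - m) < 1 := (div_lt_one hM).2 (by linarith)
        obtain ⟨ν, hν, hprop⟩ := hD _ ⟨ha0, ha1⟩ (u z - ε/2 - m) hM m
        have hδν : 0 < (ε/2) * ν := mul_pos (by linarith) hν.1
        obtain ⟨ρ, hρIoc, hAρ⟩ := ((Filter.eventually_iff.2 (Ioc_mem_nhdsGT_of_mem
            (⟨le_rfl, hr₀⟩ : (0:ℝ) ∈ Ico 0 r₀))).and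
          (hLeb.eventually_lt_const hδν)).exists
        have hρ0 : 0 < ρ := hρIoc.1
        have hρr₀ : ρ ≤ r₀ := hρIoc.2
        have hsetsub : {w ∈ ball z.1 ρ ×ˢ Ioo (z.2 - ρ ^ p) (z.2 + ρ ^ p) |
              u w ≤ m + (u z - ε/2 - m)} ⊆
            {w ∈ ball z.1 ρ ×ˢ Ioo (z.2 - ρ ^ p) (z.2 + ρ ^ p) | ε/2 ≤ |u z - u w|} := by
          rintro w ⟨hw1, hw2⟩
          refine ⟨hw1, ?_⟩
          have h7 : ε/2 ≤ u z - u w := by linarith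
          exact h7.trans (le_abs_self _)
        have hchebfinal := le_trans (measure_mono hsetsub)
          (cheb ρ hρ0 hρr₀ (ε/2) ν (by linarith) hν.1 hAρ)
        have hae2 := hprop z ρ hρ0 (hQΩ' ρ hρ0 hρr₀)
          ((haeLB ρ hρ0 hρr₀).mono fun w hw => hw.1) hchebfinal
        have haM : m + ((u z - ε - m)/(u z - ε/2 - m)) * (u z - ε/2 - m) = u z - ε := by
          rw [div_mul_cancel₀ _ hM.ne']
          ring
        have h8 : ((u z - ε : ℝ) : EReal) ≤ essInf (fun w => (u w : EReal))
            (volume.restrict (ball z.1 (c*ρ) ×ˢ Ioo (z.2 - (c*ρ) ^ p) (z.2 + (c*ρ) ^ p))) := by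
          refine stmt17_coe_le_essInf (hae2.mono fun w hw => ?_)
          rw [haM] at hw
          exact hw
        exact h8.trans (hfle z hz (c*ρ) (mul_pos hc0 hρ0))
    -- Claim IV : ustarU z ≤ u z + ε for all ε
    have claimIV : ∀ ε : ℝ, 0 < ε → ustarU z ≤ ((u z + ε : ℝ) : EReal) := by
      intro ε hε
      by_cases hcase : M' ≤ u z + ε
      · refine le_trans (hgle z hz r₀ hr₀) ?_
        exact le_trans
          (stmt17_essSup_le_coe ((haeLB r₀ hr₀ le_rfl).mono fun w hw => hw.2))
          (EReal.coe_le_coe_iff.2 hcase)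
      · push_neg at hcase
        have hM : 0 < M' - u z - ε/2 := by linarith
        have ha0 : 0 < (M' - u z - ε)/(M' - u z - ε/2) := div_pos (by linarith) hM
        have ha1 : (M' - u z - ε)/(M' - u z - ε/2) < 1 := (div_lt_one hM).2 (by linarith)
        obtain ⟨ν, hν, hprop⟩ := hD' _ ⟨ha0, ha1⟩ (M' - u z - ε/2) hM (-M')
        have hδν : 0 < (ε/2) * ν := mul_pos (by linarith) hν.1
        obtain ⟨ρ, hρIoc, hAρ⟩ := ((Filter.eventually_iff.2 (Ioc_mem_nhdsGT_of_mem
            (⟨le_rfl, hr₀⟩ : (0:ℝ) ∈ Ico 0 r₀))).and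
          (hLeb.eventually_lt_const hδν)).exists
        have hρ0 : 0 < ρ := hρIoc.1
        have hρr₀ : ρ ≤ r₀ := hρIoc.2
        have hsetsub : {w ∈ ball z.1 ρ ×ˢ Ioo (z.2 - ρ ^ p) (z.2 + ρ ^ p) |
              -u w ≤ -M' + (M' - u z - ε/2)} ⊆
            {w ∈ ball z.1 ρ ×ˢ Ioo (z.2 - ρ ^ p) (z.2 + ρ ^ p) | ε/2 ≤ |u z - u w|} := by
          rintro w ⟨hw1, hw2⟩
          refine ⟨hw1, ?_⟩
          have h7 : ε/2 ≤ u w - u z := by linarith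
          have h9 : u w - u z ≤ |u z - u w| := by
            rw [abs_sub_comm]
            exact le_abs_self _
          linarith
        have hchebfinal := le_trans (measure_mono hsetsub)
          (cheb ρ hρ0 hρr₀ (ε/2) ν (by linarith) hν.1 hAρ)
        have hae2 := hprop z ρ hρ0 (hQΩ' ρ hρ0 hρr₀)
          ((haeLB ρ hρ0 hρr₀).mono fun w hw => by linarith [hw.2]) hchebfinal
        have haM : -M' + ((M' - u z - ε)/(M' - u z - ε/2)) * (M' - u z - ε/2) = -(u z + ε) := by
          rw [div_mul_cancel₀ _ hM.ne']
          ring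
        have h8 : essSup (fun w => (u w : EReal))
            (volume.restrict (ball z.1 (c*ρ) ×ˢ Ioo (z.2 - (c*ρ) ^ p) (z.2 + (c*ρ) ^ p))) ≤
            ((u z + ε : ℝ) : EReal) := by
          refine stmt17_essSup_le_coe (hae2.mono fun w hw => ?_)
          rw [haM] at hw
          linarith
        exact (hgle z hz (c*ρ) (mul_pos hc0 hρ0)).trans h8
    exact ⟨le_antisymm claimI (stmt17_coe_le_of_forall claimIII),
      le_antisymm (stmt17_le_coe_of_forall claimIV) claimII⟩
  refine ⟨hLSC, hUSC, hle, key, ?_⟩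
  filter_upwards [stmt17_aeLeb hp ΩT hΩT u huloc, ae_restrict_mem hΩT.measurableSet]
    with z h1 h2
  rw [(key z h2 h1).1, (key z h2 h1).2]
end
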